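/- Let p be a prime, q a positive power of p, K a separably closed field of characteristic p, and d ≥ 1 an integer. Let R = K^d with componentwise ring operations and let σ : R → R be the ring endomorphism σ(z_0, …, z_{d−1}) = (z_{d−1}^q, z_0^q, …, z_{d−2}^q); extend σ to the power series ring R[[t]] by applying it to every coefficient. Then for every unit f of R[[t]] there exists a unit s of R[[t]] such that σ(s) = f · s. -/

import Mathlib

open Finset
open Fin.NatCast Fin.CommRing

section cyclic

variable {p e : ℕ} [Fact p.Prime] {K : Type*} [Field K] [CharP K p] [IsSepClosed K]

private lemma qd_cast_zero (he : 1 ≤ e) {d : ℕ} (hd : d ≠ 0) :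
    (((p ^ e) ^ d : ℕ) : K) = 0 := by
  have hp : ((p : K)) = 0 := CharP.cast_eq_zero K p
  rw [Nat.cast_pow, Nat.cast_pow, hp, zero_pow (by omega : e ≠ 0), zero_pow hd]

private lemma two_le_qd (he : 1 ≤ e) {d : ℕ} (hd : d ≠ 0) : 2 ≤ (p ^ e) ^ d := by
  have hp : 2 ≤ p := (Fact.out : p.Prime).two_le
  calc 2 ≤ p := hp
    _ = p ^ 1 := (pow_one p).symm
    _ ≤ (p ^ e) ^ d := by
        rw [← pow_mul]
        exact Nat.pow_le_pow_right (le_trans one_le_two hp)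
          (by nlinarith [Nat.one_le_iff_ne_zero.mpr hd])

/-- Solve the cyclic affine system `s (i-1) ^ q = a i * s i + b i`. -/
private lemma cyclic_affine (he : 1 ≤ e) (d : ℕ) [NeZero d] (a b : Fin d → K)
    (ha : ∀ i, a i ≠ 0) :
    ∃ s : Fin d → K, ∀ i : Fin d, s (i - 1) ^ p ^ e = a i * s i + b i := by
  set q := p ^ e with hq
  have hd : d ≠ 0 := NeZero.ne d
  -- coefficient sequences
  let A : ℕ → K := fun n => Nat.rec (1 : K) (fun n An => An ^ q / a (↑(n + 1))) n
  let B : ℕ → K := fun n => Nat.rec (0 : K) (fun n Bn => (Bn ^ q - b (↑(n + 1))) / a (↑(n + 1))) n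
  have hA0 : A 0 = 1 := rfl
  have hB0 : B 0 = 0 := rfl
  have hAs : ∀ n, A (n + 1) = A n ^ q / a (↑(n + 1)) := fun n => rfl
  have hBs : ∀ n, B (n + 1) = (B n ^ q - b (↑(n + 1))) / a (↑(n + 1)) := fun n => rfl
  have hAne : ∀ n, A n ≠ 0 := by
    intro n
    induction n with
    | zero => rw [hA0]; exact one_ne_zero
    | succ n ih => rw [hAs]; exact div_ne_zero (pow_ne_zero _ ih) (ha _)
  -- choose the root x
  obtain ⟨x, hx⟩ := IsSepClosed.exists_root_C_mul_X_pow_add_C_mul_X_add_C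
    (k := K) (n := q ^ d) (A (d - 1) ^ q) (-(a 0)) (B (d - 1) ^ q - b 0)
    (qd_cast_zero he hd) (two_le_qd he hd) (neg_ne_zero.2 (ha 0))
  have hwrap : A (d - 1) ^ q * x ^ q ^ d + B (d - 1) ^ q = a 0 * x + b 0 := by
    linear_combination hx
  refine ⟨fun i => A i.val * x ^ q ^ i.val + B i.val, ?_⟩
  -- key identity, for all m
  have key : ∀ m : ℕ,
      (A m * x ^ q ^ m + B m) ^ q
        = a (↑(m + 1)) * (A (m + 1) * x ^ q ^ (m + 1) + B (m + 1)) + b (↑(m + 1)) := by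
    intro m
    have hfr : (A m * x ^ q ^ m + B m) ^ q = A m ^ q * x ^ q ^ (m + 1) + B m ^ q := by
      rw [hq, add_pow_char_pow, mul_pow, ← pow_mul, ← pow_succ]
    rw [hfr, hAs, hBs]
    generalize hane' : a (↑(m + 1) : Fin d) = aa
    have hane : aa ≠ 0 := hane' ▸ ha _
    field_simp
    ring
  intro i
  beta_reduce
  by_cases hi0 : i = 0
  · subst hi0
    have hdd : d - 1 < d := Nat.sub_lt (Nat.pos_of_ne_zero hd) one_pos
    have hcast1 : ((d - 1 : ℕ) : Fin d) + 1 = 0 := by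
      have h1 : ((d - 1 : ℕ) : Fin d) + 1 = ((d - 1 + 1 : ℕ) : Fin d) := by push_cast; ring
      rw [h1, Nat.sub_add_cancel (Nat.one_le_iff_ne_zero.mpr hd), Fin.natCast_self]
    have hsub : (0 : Fin d) - 1 = ((d - 1 : ℕ) : Fin d) := by
      rw [← hcast1]; ring
    have hval : (((d - 1 : ℕ) : Fin d)).val = d - 1 := Fin.val_cast_of_lt hdd
    simp only [hsub, hval, Fin.val_zero, hA0, hB0, pow_zero, pow_one, one_mul, add_zero]
    have hfr : (A (d - 1) * x ^ q ^ (d - 1) + B (d - 1)) ^ q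
        = A (d - 1) ^ q * x ^ q ^ d + B (d - 1) ^ q := by
      rw [hq, add_pow_char_pow, mul_pow, ← pow_mul, ← pow_succ,
        Nat.sub_add_cancel (Nat.one_le_iff_ne_zero.mpr hd)]
    rw [hfr, hwrap]
  · -- i ≠ 0
    have hipos : 0 < i.val := Nat.pos_of_ne_zero (fun h => hi0 (Fin.ext (by simp [h])))
    set m := i.val - 1 with hm
    have hm1 : m + 1 = i.val := Nat.succ_pred_eq_of_pos hipos
    have hmlt : m + 1 < d := hm1 ▸ i.isLt
    have hieq : i = ((m + 1 : ℕ) : Fin d) := by rw [hm1, Fin.cast_val_eq_self]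
    have hisub : i - 1 = ((m : ℕ) : Fin d) := by
      rw [hieq]; push_cast; ring
    have hvm : ((m : ℕ) : Fin d).val = m :=
      Fin.val_cast_of_lt (lt_trans (Nat.lt_succ_self m) hmlt)
    have hvm1 : (((m + 1 : ℕ)) : Fin d).val = m + 1 := Fin.val_cast_of_lt hmlt
    rw [hisub, hieq]
    simp only [hvm, hvm1]
    exact key m

/-- Solve the cyclic multiplicative system `s (i-1) ^ q = a i * s i` with `s` everywhere nonzero. -/
private lemma cyclic_mul (he : 1 ≤ e) (d : ℕ) [NeZero d] (a : Fin d → K)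
    (ha : ∀ i, a i ≠ 0) :
    ∃ s : Fin d → K, (∀ i, s i ≠ 0) ∧ ∀ i : Fin d, s (i - 1) ^ p ^ e = a i * s i := by
  set q := p ^ e with hq
  have hd : d ≠ 0 := NeZero.ne d
  have h2q : 2 ≤ q ^ d := by rw [hq]; exact two_le_qd he hd
  have hqdK : ((q ^ d : ℕ) : K) = 0 := by rw [hq]; exact qd_cast_zero he hd
  let A : ℕ → K := fun n => Nat.rec (1 : K) (fun n An => An ^ q / a (↑(n + 1))) n
  have hA0 : A 0 = 1 := rfl
  have hAs : ∀ n, A (n + 1) = A n ^ q / a (↑(n + 1)) := fun n => rfl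
  have hAne : ∀ n, A n ≠ 0 := by
    intro n
    induction n with
    | zero => rw [hA0]; exact one_ne_zero
    | succ n ih => rw [hAs]; exact div_ne_zero (pow_ne_zero _ ih) (ha _)
  -- choose a nonzero root x of x ^ (q^d - 1) = a 0 / A (d-1) ^ q
  haveI : NeZero (((q ^ d - 1 : ℕ) : K)) := by
    constructor
    rw [Nat.cast_sub (by omega : 1 ≤ q ^ d), Nat.cast_one, hqdK, zero_sub]
    exact neg_ne_zero.2 one_ne_zero
  obtain ⟨x, hxval⟩ := IsSepClosed.exists_pow_nat_eq (a 0 / A (d - 1) ^ q) (q ^ d - 1)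
  have hxne : x ≠ 0 := by
    intro h
    rw [h, zero_pow] at hxval
    · exact (div_ne_zero (ha 0) (pow_ne_zero _ (hAne _))) hxval.symm
    · omega
  have hwrap : A (d - 1) ^ q * x ^ q ^ d = a 0 * x := by
    have h1 : x ^ q ^ d = x ^ (q ^ d - 1) * x := by
      rw [← pow_succ, Nat.sub_add_cancel (by omega)]
    have hAq : A (d - 1) ^ q ≠ 0 := pow_ne_zero _ (hAne _)
    have h2 : A (d - 1) ^ q * (a 0 / A (d - 1) ^ q) = a 0 := by
      rw [mul_comm, div_mul_cancel₀ _ hAq]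
    rw [h1, hxval, ← mul_assoc, h2]
  refine ⟨fun i => A i.val * x ^ q ^ i.val, fun i => mul_ne_zero (hAne _) (pow_ne_zero _ hxne), ?_⟩
  have key : ∀ m : ℕ,
      (A m * x ^ q ^ m) ^ q = a (↑(m + 1)) * (A (m + 1) * x ^ q ^ (m + 1)) := by
    intro m
    have hfr : (A m * x ^ q ^ m) ^ q = A m ^ q * x ^ q ^ (m + 1) := by
      rw [mul_pow, ← pow_mul, ← pow_succ]
    rw [hfr, hAs]
    generalize hane' : a (↑(m + 1) : Fin d) = aa
    have hane : aa ≠ 0 := hane' ▸ ha _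
    field_simp
  intro i
  beta_reduce
  by_cases hi0 : i = 0
  · subst hi0
    have hdd : d - 1 < d := Nat.sub_lt (Nat.pos_of_ne_zero hd) one_pos
    have hcast1 : ((d - 1 : ℕ) : Fin d) + 1 = 0 := by
      have h1 : ((d - 1 : ℕ) : Fin d) + 1 = ((d - 1 + 1 : ℕ) : Fin d) := by push_cast; ring
      rw [h1, Nat.sub_add_cancel (Nat.one_le_iff_ne_zero.mpr hd), Fin.natCast_self]
    have hsub : (0 : Fin d) - 1 = ((d - 1 : ℕ) : Fin d) := by
      rw [← hcast1]; ring
    have hval : (((d - 1 : ℕ) : Fin d)).val = d - 1 := Fin.val_cast_of_lt hdd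
    simp only [hsub, hval, Fin.val_zero, hA0, pow_zero, pow_one, one_mul]
    have hfr : (A (d - 1) * x ^ q ^ (d - 1)) ^ q = A (d - 1) ^ q * x ^ q ^ d := by
      rw [mul_pow, ← pow_mul, ← pow_succ, Nat.sub_add_cancel (Nat.one_le_iff_ne_zero.mpr hd)]
    rw [hfr, hwrap]
  · have hipos : 0 < i.val := Nat.pos_of_ne_zero (fun h => hi0 (Fin.ext (by simp [h])))
    set m := i.val - 1 with hm
    have hm1 : m + 1 = i.val := Nat.succ_pred_eq_of_pos hipos
    have hmlt : m + 1 < d := hm1 ▸ i.isLt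
    have hieq : i = ((m + 1 : ℕ) : Fin d) := by rw [hm1, Fin.cast_val_eq_self]
    have hisub : i - 1 = ((m : ℕ) : Fin d) := by
      rw [hieq]; push_cast; ring
    have hvm : ((m : ℕ) : Fin d).val = m :=
      Fin.val_cast_of_lt (lt_trans (Nat.lt_succ_self m) hmlt)
    have hvm1 : (((m + 1 : ℕ)) : Fin d).val = m + 1 := Fin.val_cast_of_lt hmlt
    rw [hisub, hieq]
    simp only [hvm, hvm1]
    exact key m

end cyclic

/-- **Every unit power series is a `σ`-quotient `σ(s)/s`** (Lemma 6.8 of the paper).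
Let `p` be a prime, `q = p^e` a positive power of `p`, `K` a separably closed field of
characteristic `p`, and `d ≥ 1`.  Let `R = K^d` and let `σ : R → R` be the ring endomorphism
`σ (z_0, …, z_{d-1}) = (z_{d-1}^q, z_0^q, …, z_{d-2}^q)`, extended coefficientwise to `R[[t]]`.
Then for every unit `f` of `R[[t]]` there is a unit `s` of `R[[t]]` with `σ(s) = f * s`. -/
theorem stmt4 (p : ℕ) [Fact p.Prime] (e : ℕ) (he : 1 ≤ e)
    {K : Type*} [Field K] [CharP K p] [IsSepClosed K]
    (d : ℕ) [NeZero d]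
    (σ : (Fin d → K) →+* (Fin d → K))
    (hσ : ∀ (z : Fin d → K) (i : Fin d), σ z i = z (i - 1) ^ p ^ e)
    (f : PowerSeries (Fin d → K)) (hf : IsUnit f) :
    ∃ s : PowerSeries (Fin d → K), IsUnit s ∧ PowerSeries.map σ s = f * s := by
  set q := p ^ e with hq
  set a : ℕ → Fin d → K := fun n => PowerSeries.coeff n f with ha_def
  have ha0 : ∀ i, a 0 i ≠ 0 := by
    intro i h
    obtain ⟨u, hu⟩ := PowerSeries.isUnit_constantCoeff f hf
    have h2 := congrFun u.mul_inv i
    rw [hu, Pi.mul_apply, Pi.one_apply] at h2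
    simp only [ha_def, PowerSeries.coeff_zero_eq_constantCoeff_apply] at h
    rw [h, zero_mul] at h2
    exact zero_ne_one h2
  obtain ⟨s0, hs0ne, hs0⟩ := cyclic_mul (p := p) he d (a 0) ha0
  have hstep : ∀ b : Fin d → K, ∃ s : Fin d → K,
      ∀ i, s (i - 1) ^ q = a 0 i * s i + b i :=
    fun b => cyclic_affine (p := p) he d (a 0) b ha0
  choose step hstepspec using hstep
  -- build the coefficient sequence by recursion with an accumulator
  let g : ℕ → ℕ → Fin d → K := fun n =>
    Nat.rec (fun _ => s0) (fun n gn =>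
      Function.update gn (n + 1)
        (step (∑ k ∈ Finset.range (n + 1), a (n + 1 - k) * gn k))) n
  let c : ℕ → Fin d → K := fun n => g n n
  have hgc : ∀ n m, m ≤ n → g n m = c m := by
    intro n
    induction n with
    | zero => intro m hm; rw [Nat.le_zero.mp hm]
    | succ n ih =>
      intro m hm
      rcases Nat.lt_succ_iff_lt_or_eq.mp (Nat.lt_succ_of_le hm) with h | h
      · have hmn : m ≤ n := Nat.lt_succ_iff.mp h
        have h1 : g (n + 1) m = g n m := by
          show Function.update (g n) (n + 1) _ m = g n m
          exact Function.update_of_ne (by omega) _ _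
        rw [h1, ih m hmn]
      · rw [h]
  have hc0 : c 0 = s0 := rfl
  have hcsucc : ∀ n, c (n + 1) = step (∑ k ∈ Finset.range (n + 1), a (n + 1 - k) * c k) := by
    intro n
    have h1 : c (n + 1) = step (∑ k ∈ Finset.range (n + 1), a (n + 1 - k) * g n k) := by
      show Function.update (g n) (n + 1) _ (n + 1) = _
      simp only [Function.update_self]
      rfl
    have h2 : (∑ k ∈ Finset.range (n + 1), a (n + 1 - k) * g n k)
        = ∑ k ∈ Finset.range (n + 1), a (n + 1 - k) * c k := by
      refine Finset.sum_congr rfl fun k hk => ?_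
      rw [hgc n k (Nat.lt_succ_iff.mp (Finset.mem_range.mp hk))]
    rw [h1, h2]
  -- the key coefficientwise relation
  have hrel : ∀ n, σ (c n) = ∑ k ∈ Finset.range (n + 1), a (n - k) * c k := by
    intro n
    funext i
    rw [hσ]
    cases n with
    | zero =>
      rw [Finset.sum_apply, Finset.sum_range_one]
      simp only [Nat.sub_zero, Pi.mul_apply]
      exact hs0 i
    | succ n =>
      have hstepeq := hstepspec (∑ k ∈ Finset.range (n + 1), a (n + 1 - k) * c k) i
      rw [← hcsucc n] at hstepeq
      rw [hstepeq]
      conv_rhs => rw [Finset.sum_apply, Finset.sum_range_succ]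
      simp only [Nat.sub_self, Pi.mul_apply, Finset.sum_apply]
      ring
  refine ⟨PowerSeries.mk c, ?_, ?_⟩
  · rw [PowerSeries.isUnit_iff_constantCoeff, PowerSeries.constantCoeff_mk]
    refine IsUnit.of_mul_eq_one (fun i => (c 0 i)⁻¹) ?_
    funext i
    exact mul_inv_cancel₀ (hc0 ▸ hs0ne i)
  · ext1 n
    rw [PowerSeries.coeff_map, PowerSeries.coeff_mk, PowerSeries.coeff_mul, hrel n,
      Finset.Nat.sum_antidiagonal_eq_sum_range_succ
        (fun i j => (PowerSeries.coeff i) f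
          * (PowerSeries.coeff j) (PowerSeries.mk c)) n,
      ← Finset.sum_range_reflect (fun k => (PowerSeries.coeff k) f
          * (PowerSeries.coeff (n - k)) (PowerSeries.mk c)) (n + 1)]
    refine Finset.sum_congr rfl fun k hk => ?_
    have hk' : k ≤ n := Nat.lt_succ_iff.mp (Finset.mem_range.mp hk)
    rw [show n + 1 - 1 - k = n - k from by omega, show n - (n - k) = k from by omega,
      PowerSeries.coeff_mk]
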